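/- Let M₃ := {(t, y₁, y₂) ∈ ℝ³ : (y₁, y₂) ≠ (0,0)} (three-dimensional Minkowski spacetime with a timelike line removed). With p := (0, −1, 0) and q := (2, 1, 0): (i) it is NOT the case that p ≤ q; yet (ii) for every ε > 0 one has p ≤ (2+ε, 1, 0). Since (2+1/k, 1, 0) → q as k → ∞, the causal relation ≤ on M₃ is not a closed subset of M₃ × M₃. -/

import Mathlib

open Set

/-- Three-dimensional Minkowski spacetime with the timelike line `y₁ = y₂ = 0` removed. -/
def M₃ : Set (ℝ × ℝ × ℝ) := {v | (v.2.1, v.2.2) ≠ ((0 : ℝ), (0 : ℝ))}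

/-- The causal relation of `M₃ ⊆ ℝ³` as a region of three-dimensional Minkowski spacetime:
`p ≤ q` iff some continuous curve in `M₃` from `p` to `q` has all its increments in the
closed future cone `{v : v.1 ≥ √(v.2² + v.3²)}`. -/
def CausalM₃ (p q : ℝ × ℝ × ℝ) : Prop :=
  ∃ γ : ℝ → ℝ × ℝ × ℝ, ContinuousOn γ (Set.Icc 0 1) ∧ γ '' Set.Icc 0 1 ⊆ M₃ ∧
    γ 0 = p ∧ γ 1 = q ∧
    ∀ s s' : ℝ, 0 ≤ s → s ≤ s' → s' ≤ 1 →
      Real.sqrt ((γ s' - γ s).2.1 ^ 2 + (γ s' - γ s).2.2 ^ 2) ≤ (γ s' - γ s).1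


lemma key1 : ¬ CausalM₃ (0, -1, 0) (2, 1, 0) := by
  rintro ⟨γ, hcont, hM, h0, h1, hc⟩
  have hy1 : ContinuousOn (fun s => (γ s).2.1) (Icc (0:ℝ) 1) :=
    (continuous_fst.comp continuous_snd).comp_continuousOn hcont
  have hmem0 : (0:ℝ) ∈ (fun s => (γ s).2.1) '' Icc (0:ℝ) 1 := by
    apply intermediate_value_Icc (by norm_num : (0:ℝ) ≤ 1) hy1
    simp [h0, h1]
  obtain ⟨s₀, hs₀, hy0⟩ := hmem0
  have hmem : γ s₀ ∈ M₃ := hM ⟨s₀, hs₀, rfl⟩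
  have hy0' : (γ s₀).2.1 = 0 := hy0
  have hy2 : (γ s₀).2.2 ≠ 0 := fun h => hmem (by rw [hy0', h])
  have h1' := hc 0 s₀ le_rfl hs₀.1 hs₀.2
  have h2' := hc s₀ 1 hs₀.1 hs₀.2 le_rfl
  simp only [Prod.fst_sub, Prod.snd_sub, h0, h1] at h1' h2'
  rw [hy0'] at h1' h2'
  have hsq : (1:ℝ) < Real.sqrt (1 + (γ s₀).2.2 ^ 2) := by
    rw [Real.lt_sqrt (by norm_num)]
    nlinarith [sq_pos_of_ne_zero hy2]
  have e1 : Real.sqrt (1 + (γ s₀).2.2 ^ 2) ≤ (γ s₀).1 := by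
    have hr : ((0:ℝ) - -1) ^ 2 + ((γ s₀).2.2 - 0) ^ 2 = 1 + (γ s₀).2.2 ^ 2 := by ring
    rw [hr] at h1'
    linarith
  have e2 : Real.sqrt (1 + (γ s₀).2.2 ^ 2) ≤ 2 - (γ s₀).1 := by
    have hr : ((1:ℝ) - 0) ^ 2 + (0 - (γ s₀).2.2) ^ 2 = 1 + (γ s₀).2.2 ^ 2 := by ring
    rw [hr] at h2'
    linarith
  linarith

lemma key2 : ∀ ε : ℝ, 0 < ε → CausalM₃ (0, -1, 0) (2 + ε, 1, 0) := by
  intro ε hε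
  refine ⟨fun s => ((2+ε)*s, -1 + 2*s, (ε/2)*(1 - |2*s - 1|)), ?_, ?_, ?_, ?_, ?_⟩
  · apply Continuous.continuousOn
    fun_prop
  · rintro _ ⟨s, hs, rfl⟩
    intro h
    simp only [Prod.mk.injEq] at h
    obtain ⟨h1, h2⟩ := h
    have hs2 : s = 1/2 := by linarith
    subst hs2
    norm_num at h2
    linarith
  · norm_num
  · norm_num
  · intro s s' hs hss' hs'
    simp only [Prod.fst_sub, Prod.snd_sub]
    have habs : (|2*s-1| - |2*s'-1|)^2 ≤ (2*s - 2*s')^2 := by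
      nlinarith [sq_abs (2*s-1), sq_abs (2*s'-1),
        le_abs_self ((2*s-1)*(2*s'-1)), abs_mul (2*s-1) (2*s'-1)]
    have hX : ((-1 + 2*s') - (-1 + 2*s))^2
        + ((ε/2)*(1 - |2*s'-1|) - (ε/2)*(1 - |2*s-1|))^2
        ≤ ((2+ε)*(s'-s))^2 := by
      nlinarith [mul_le_mul_of_nonneg_left habs (by positivity : (0:ℝ) ≤ (ε/2)^2),
        mul_nonneg (mul_nonneg hε.le (sub_nonneg.mpr hss')) (sub_nonneg.mpr hss')]
    calc Real.sqrt (((-1 + 2*s') - (-1 + 2*s))^2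
          + ((ε/2)*(1 - |2*s'-1|) - (ε/2)*(1 - |2*s-1|))^2)
        ≤ Real.sqrt (((2+ε)*(s'-s))^2) := Real.sqrt_le_sqrt hX
      _ = (2+ε)*(s'-s) := Real.sqrt_sq (by nlinarith)
      _ = (2+ε)*s' - (2+ε)*s := by ring

/-- **The causal relation on `M₃` is not closed.** With `p = (0,-1,0)` and `q = (2,1,0)`:
(i) `p ≤ q` fails; (ii) `p ≤ (2+ε,1,0)` holds for every `ε > 0`; consequently the causal
relation is not a closed subset of `M₃ × M₃`. -/
theorem causal_relation_M₃_not_closed :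
    ¬ CausalM₃ (0, -1, 0) (2, 1, 0) ∧
    (∀ ε : ℝ, 0 < ε → CausalM₃ (0, -1, 0) (2 + ε, 1, 0)) ∧
    ¬ IsClosed {x : M₃ × M₃ | CausalM₃ x.1.val x.2.val} := by
  refine ⟨key1, key2, ?_⟩
  intro hcl
  have hp : ((0:ℝ), (-1:ℝ), (0:ℝ)) ∈ M₃ := by simp [M₃]
  have hq : ((2:ℝ), (1:ℝ), (0:ℝ)) ∈ M₃ := by simp [M₃]
  have hqk : ∀ k : ℕ, ((2 + 1/(k+1) : ℝ), (1:ℝ), (0:ℝ)) ∈ M₃ := by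
    intro k; simp [M₃]
  set u : ℕ → M₃ × M₃ := fun k => (⟨_, hp⟩, ⟨_, hqk k⟩) with hu
  have hmem : ∀ k, u k ∈ {x : M₃ × M₃ | CausalM₃ x.1.val x.2.val} := by
    intro k
    exact key2 (1/(k+1)) (by positivity)
  have htend : Filter.Tendsto u Filter.atTop (nhds (⟨_, hp⟩, ⟨_, hq⟩)) := by
    apply Filter.Tendsto.prodMk_nhds
    · exact tendsto_const_nhds
    · rw [tendsto_subtype_rng]
      have h1 : Filter.Tendsto (fun k : ℕ => (2 + 1/(k+1) : ℝ)) Filter.atTop (nhds 2) := by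
        have := tendsto_one_div_add_atTop_nhds_zero_nat (𝕜 := ℝ)
        simpa using (tendsto_const_nhds (x := (2:ℝ))).add this
      exact (h1.prodMk_nhds (tendsto_const_nhds)).congr (fun k => rfl)
  have := hcl.mem_of_tendsto htend (Filter.Eventually.of_forall hmem)
  exact key1 this
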